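/- Let M be an n×n real matrix with M_{ii} = 0 for every i, such that for every permutation σ of {1,…,n} the sum M_{1,σ(1)} + … + M_{n,σ(n)} is nonnegative. Then M is similar to a matrix with all entries nonnegative; that is, there exist real numbers s₁,…,s_n such that M_{ij} + s_i − s_j ≥ 0 for all i, j. -/

import Mathlib

/-- Tropical (min-plus) matrix product. -/
noncomputable def tropMul {l m o : Type*} [Fintype m] [Nonempty m]
    (A : Matrix l m ℝ) (B : Matrix m o ℝ) : Matrix l o ℝ :=
  fun i j => Finset.univ.inf' Finset.univ_nonempty fun t => A i t + B t j

/-- Evaluation of a word over `{x, y}` (here `true` stands for `x`, `false` for `y`)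
as a tropical matrix product; the empty word evaluates to the junk value `A`. -/
noncomputable def evalWord {n : ℕ} [NeZero n] (A B : Matrix (Fin n) (Fin n) ℝ) :
    List Bool → Matrix (Fin n) (Fin n) ℝ
  | [] => A
  | b :: t => t.foldl (fun M c => tropMul M (cond c A B)) (cond b A B)

/-- Tropical matrix power (`tropPow A k` is `A^k` for `k ≥ 1`; `A^0` is junk `= A`). -/
noncomputable def tropPow {n : ℕ} [NeZero n] (A : Matrix (Fin n) (Fin n) ℝ) (k : ℕ) :
    Matrix (Fin n) (Fin n) ℝ :=
  evalWord A A (List.replicate k true)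

/-- Tropical permanent. -/
noncomputable def tropPerm {n : ℕ} (A : Matrix (Fin n) (Fin n) ℝ) : ℝ :=
  Finset.univ.inf' Finset.univ_nonempty fun σ : Equiv.Perm (Fin n) => ∑ i, A i (σ i)

/-- `Σ(A)`: the set of permutations attaining the tropical permanent. -/
def minPerms {n : ℕ} (A : Matrix (Fin n) (Fin n) ℝ) : Set (Equiv.Perm (Fin n)) :=
  { σ | ∑ i, A i (σ i) = tropPerm A }

/-- A matrix is sign-nonsingular if all permutations in `Σ(A)` have the same parity. -/
def SignNonsingular {n : ℕ} (A : Matrix (Fin n) (Fin n) ℝ) : Prop :=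
  ∀ σ ∈ minPerms A, ∀ τ ∈ minPerms A, Equiv.Perm.sign σ = Equiv.Perm.sign τ

/-- A matrix is sign-singular if `Σ(A)` contains two permutations of different parity. -/
def SignSingular {n : ℕ} (A : Matrix (Fin n) (Fin n) ℝ) : Prop :=
  ∃ σ ∈ minPerms A, ∃ τ ∈ minPerms A, Equiv.Perm.sign σ ≠ Equiv.Perm.sign τ

/-- Similarity transformation determined by `s`. -/
def simTrans {n : ℕ} (s : Fin n → ℝ) (C : Matrix (Fin n) (Fin n) ℝ) :
    Matrix (Fin n) (Fin n) ℝ :=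
  fun i j => C i j + s i - s j

/-- Diagonally `H`-dominant matrix. -/
def DiagDominant {n : ℕ} (H : ℝ) (A : Matrix (Fin n) (Fin n) ℝ) : Prop :=
  ∀ i j, A i j ≥ max (A i i) (A j j) + H * |A i i - A j j|

/-- Diagonally `H`-dominant pair of matrices. -/
def DiagDomPair {n : ℕ} (H : ℝ) (A B : Matrix (Fin n) (Fin n) ℝ) : Prop :=
  (∀ i, A i i = B i i) ∧ DiagDominant H (fun i j => min (A i j) (B i j))

namespace Stmt8Aux
open List

variable {n : ℕ} {α : Type*}

/-- Weight of a walk given as a list of vertices. -/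
noncomputable def wt (M : Matrix (Fin n) (Fin n) ℝ) : List (Fin n) → ℝ :=
  fun l => (List.zipWith (fun a b => M a b) l l.tail).sum

@[simp] lemma wt_nil (M : Matrix (Fin n) (Fin n) ℝ) : wt M [] = 0 := by simp [wt]

@[simp] lemma wt_single (M : Matrix (Fin n) (Fin n) ℝ) (a : Fin n) : wt M [a] = 0 := by
  simp [wt]

@[simp] lemma wt_cons_cons (M : Matrix (Fin n) (Fin n) ℝ) (a b : Fin n) (l : List (Fin n)) :
    wt M (a :: b :: l) = M a b + wt M (b :: l) := by simp [wt]

lemma wt_append (M : Matrix (Fin n) (Fin n) ℝ) (a : Fin n) (l2 : List (Fin n)) :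
    ∀ l1 : List (Fin n), wt M (l1 ++ a :: l2) = wt M (l1 ++ [a]) + wt M (a :: l2)
  | [] => by simp
  | [b] => by simp
  | b :: c :: l1 => by
    have := wt_append M a l2 (c :: l1)
    simp only [cons_append, wt_cons_cons] at *
    rw [this]; ring

lemma wt_closed_eq (M : Matrix (Fin n) (Fin n) ℝ) (p : List (Fin n)) (h : p ≠ []) :
    wt M (p ++ [p.head h]) =
      ∑ i : Fin p.length, M (p[(i : ℕ)]) (p[((i : ℕ) + 1) % p.length]'
        (Nat.mod_lt _ (Nat.zero_lt_of_lt i.2))) := by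
  have htail : (p ++ [p.head h]).tail = p.rotate 1 := by
    cases p with
    | nil => simp at h
    | cons a t => simp [rotate_cons_succ]
  have hlen : p.length = (p.rotate 1).length := by simp
  have hz : List.zipWith (fun a b => M a b) (p ++ [p.head h]) ((p ++ [p.head h]).tail)
      = List.zipWith (fun a b => M a b) p (p.rotate 1) := by
    rw [htail]
    conv_lhs => rw [show p.rotate 1 = p.rotate 1 ++ [] by simp]
    rw [List.zipWith_append hlen]
    simp
  rw [wt, hz]
  have : List.zipWith (fun a b => M a b) p (p.rotate 1)
      = List.ofFn (fun i : Fin p.length => M (p[(i : ℕ)]) (p[((i : ℕ) + 1) % p.length]'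
        (Nat.mod_lt _ (Nat.zero_lt_of_lt i.2)))) := by
    apply List.ext_getElem
    · simp
    · intro i h1 h2
      simp only [getElem_zipWith, List.getElem_ofFn, getElem_rotate]
  rw [this, List.sum_ofFn]

lemma cycle_sum_nonneg (M : Matrix (Fin n) (Fin n) ℝ)
    (hdiag : ∀ i, M i i = 0)
    (hperm : ∀ σ : Equiv.Perm (Fin n), 0 ≤ ∑ i, M i (σ i))
    (p : List (Fin n)) (hnd : p.Nodup) :
    0 ≤ ∑ i : Fin p.length, M (p[(i : ℕ)]) (p[((i : ℕ) + 1) % p.length]'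
        (Nat.mod_lt _ (Nat.zero_lt_of_lt i.2))) := by
  have key := hperm (formPerm p)
  have h1 : ∑ i, M i (formPerm p i) = ∑ i ∈ p.toFinset, M i (formPerm p i) := by
    rw [← Finset.sum_subset (Finset.subset_univ p.toFinset)]
    intro x _ hx
    rw [formPerm_apply_of_notMem (by simpa using hx), hdiag]
  have h2 : ∑ i ∈ p.toFinset, M i (formPerm p i)
      = (p.map (fun x => M x (formPerm p x))).sum := List.sum_toFinset _ hnd
  have h3 : p.map (fun x => M x (formPerm p x))
      = List.ofFn (fun i : Fin p.length => M (p[(i : ℕ)]) (p[((i : ℕ) + 1) % p.length]'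
        (Nat.mod_lt _ (Nat.zero_lt_of_lt i.2)))) := by
    apply List.ext_getElem
    · simp
    · intro i hi1 hi2
      simp only [getElem_map, List.getElem_ofFn]
      rw [formPerm_apply_getElem _ hnd]
  rw [h1, h2, h3, List.sum_ofFn] at key
  exact key

lemma not_nodup_decomp : ∀ {p : List α}, ¬ p.Nodup →
    ∃ (x : α) (l1 l2 l3 : List α), p = l1 ++ x :: l2 ++ x :: l3 := by
  intro p
  induction p with
  | nil => intro h; exact absurd List.nodup_nil h
  | cons a t ih =>
    intro h
    rw [List.nodup_cons] at h
    push_neg at h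
    by_cases ha : a ∈ t
    · obtain ⟨t1, t2, rfl⟩ := List.append_of_mem ha
      exact ⟨a, [], t1, t2, by simp⟩
    · obtain ⟨x, l1, l2, l3, rfl⟩ := ih (h ha)
      exact ⟨x, a :: l1, l2, l3, by simp⟩

lemma head_splice (l1 : List α) (x : α) (l2 l3 : List α) (h1 h2) :
    (l1 ++ x :: l3).head h1 = (l1 ++ x :: l2 ++ x :: l3).head h2 := by
  cases l1 <;> simp

lemma getLast_splice (l1 : List α) (x : α) (l2 l3 : List α) (h1 h2) :
    (l1 ++ x :: l3).getLast h1 = (l1 ++ x :: l2 ++ x :: l3).getLast h2 := by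
  have h3 : (l1 ++ x :: l2) ++ x :: l3 ≠ [] := by simp
  have e2 : (l1 ++ x :: l2 ++ x :: l3).getLast h2
      = ((l1 ++ x :: l2) ++ x :: l3).getLast h3 := by
    congr 1
  rw [List.getLast_append_of_right_ne_nil (l₁ := l1) (h := cons_ne_nil x l3), e2,
    List.getLast_append_of_right_ne_nil (h := cons_ne_nil x l3)]

lemma closed_nonneg (M : Matrix (Fin n) (Fin n) ℝ)
    (hdiag : ∀ i, M i i = 0)
    (hperm : ∀ σ : Equiv.Perm (Fin n), 0 ≤ ∑ i, M i (σ i)) :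
    ∀ (N : ℕ) (p : List (Fin n)) (h : p ≠ []), p.length ≤ N →
      0 ≤ wt M (p ++ [p.head h]) := by
  intro N
  induction N with
  | zero =>
    intro p h hl
    cases p with
    | nil => exact absurd rfl h
    | cons a t => simp at hl
  | succ N ih =>
    intro p h hl
    by_cases hnd : p.Nodup
    · rw [wt_closed_eq M p h]
      exact cycle_sum_nonneg M hdiag hperm p hnd
    · obtain ⟨x, l1, l2, l3, rfl⟩ := not_nodup_decomp hnd
      set hd := (l1 ++ x :: l2 ++ x :: l3).head h with hhd
      have hq : (l1 ++ x :: l3 : List (Fin n)) ≠ [] := by simp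
      have hqh : (l1 ++ x :: l3).head hq = hd :=
        head_splice l1 x l2 l3 hq h
      have hlen1 : (l1 ++ x :: l3).length ≤ N := by
        simp only [length_append, length_cons] at hl ⊢
        omega
      have hlen2 : (x :: l2 : List (Fin n)).length ≤ N := by
        simp only [length_append, length_cons] at hl ⊢
        omega
      have ih1 := ih (l1 ++ x :: l3) hq hlen1
      have ih2 := ih (x :: l2) (cons_ne_nil _ _) hlen2
      rw [hqh] at ih1
      have e1 : (l1 ++ x :: l3) ++ [hd] = l1 ++ x :: (l3 ++ [hd]) := by simp
      rw [e1, wt_append M x (l3 ++ [hd]) l1] at ih1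
      have hx : (x :: l2).head (cons_ne_nil _ _) = x := rfl
      rw [hx] at ih2
      have e3 : (l1 ++ x :: l2 ++ x :: l3) ++ [hd]
          = l1 ++ x :: (l2 ++ x :: (l3 ++ [hd])) := by simp
      rw [e3, wt_append M x (l2 ++ x :: (l3 ++ [hd])) l1]
      have e4 : (x :: (l2 ++ x :: (l3 ++ [hd])) : List (Fin n))
          = (x :: l2) ++ x :: (l3 ++ [hd]) := by simp
      rw [e4, wt_append M x (l3 ++ [hd]) (x :: l2)]
      linarith

lemma wt_cons (M : Matrix (Fin n) (Fin n) ℝ) (a : Fin n) (l : List (Fin n)) (h : l ≠ []) :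
    wt M (a :: l) = M a (l.head h) + wt M l := by
  cases l with
  | nil => exact absurd rfl h
  | cons b t => simp

lemma exists_short (M : Matrix (Fin n) (Fin n) ℝ)
    (hdiag : ∀ i, M i i = 0)
    (hperm : ∀ σ : Equiv.Perm (Fin n), 0 ≤ ∑ i, M i (σ i)) :
    ∀ (N : ℕ) (p : List (Fin n)) (h : p ≠ []), p.length ≤ N →
      ∃ (q : List (Fin n)) (hq : q ≠ []), q.length ≤ n ∧
        q.head hq = p.head h ∧ q.getLast hq = p.getLast h ∧ wt M q ≤ wt M p := by
  intro N
  induction N with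
  | zero =>
    intro p h hl
    cases p with
    | nil => exact absurd rfl h
    | cons a t => simp at hl
  | succ N ih =>
    intro p h hl
    by_cases hle : p.length ≤ n
    · exact ⟨p, h, hle, rfl, rfl, le_refl _⟩
    · have hnd : ¬ p.Nodup := fun hnd => hle (by simpa using hnd.length_le_card)
      obtain ⟨x, l1, l2, l3, rfl⟩ := not_nodup_decomp hnd
      have hq0 : (l1 ++ x :: l3 : List (Fin n)) ≠ [] := by simp
      have hlen0 : (l1 ++ x :: l3).length ≤ N := by
        simp only [length_append, length_cons] at hl ⊢
        omega
      obtain ⟨q, hq, hqlen, hqhead, hqlast, hqwt⟩ := ih (l1 ++ x :: l3) hq0 hlen0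
      refine ⟨q, hq, hqlen, ?_, ?_, ?_⟩
      · rw [hqhead]; exact head_splice l1 x l2 l3 hq0 h
      · rw [hqlast]; exact getLast_splice l1 x l2 l3 hq0 h
      · refine hqwt.trans ?_
        have hc := closed_nonneg M hdiag hperm (x :: l2).length (x :: l2) (cons_ne_nil _ _)
          le_rfl
        have hx : (x :: l2).head (cons_ne_nil _ _) = x := rfl
        rw [hx] at hc
        have e3 : (l1 ++ x :: l2 ++ x :: l3 : List (Fin n)) = l1 ++ x :: (l2 ++ x :: l3) := by
          simp
        rw [e3, wt_append M x (l2 ++ x :: l3) l1]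
        have e4 : (x :: (l2 ++ x :: l3) : List (Fin n)) = (x :: l2) ++ x :: l3 := by simp
        rw [e4, wt_append M x l3 (x :: l2)]
        rw [wt_append M x l3 l1]
        linarith

lemma head_replicate_append (k : ℕ) (q : List α) (hq : q ≠ []) (h') :
    (List.replicate k (q.head hq) ++ q).head h' = q.head hq := by
  cases k with
  | zero => simp
  | succ k => simp [List.replicate_succ]

lemma wt_replicate_append (M : Matrix (Fin n) (Fin n) ℝ) (hdiag : ∀ i, M i i = 0)
    (q : List (Fin n)) (hq : q ≠ []) :
    ∀ k, wt M (List.replicate k (q.head hq) ++ q) = wt M q := by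
  intro k
  induction k with
  | zero => simp
  | succ k ihk =>
    have hne : (List.replicate k (q.head hq) ++ q) ≠ [] := by simp [hq]
    rw [List.replicate_succ, cons_append, wt_cons M _ _ hne,
      head_replicate_append k q hq hne, hdiag, ihk, zero_add]

end Stmt8Aux

/-- If `M` has zero diagonal and every permutation sum is nonnegative,
then `M` is similar to an entrywise-nonnegative matrix. -/
theorem stmt8 {n : ℕ} (M : Matrix (Fin n) (Fin n) ℝ)
    (hdiag : ∀ i, M i i = 0)
    (hperm : ∀ σ : Equiv.Perm (Fin n), 0 ≤ ∑ i, M i (σ i)) :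
    ∃ s : Fin n → ℝ, ∀ i j, 0 ≤ M i j + s i - s j := by
  open Stmt8Aux in
  rcases Nat.eq_zero_or_pos n with hn | hn
  · subst hn; exact ⟨fun _ => 0, fun i => i.elim0⟩
  haveI : NeZero n := ⟨hn.ne'⟩
  set s : Fin n → ℝ := fun j => Finset.univ.inf' Finset.univ_nonempty
      (fun w : Fin n → Fin n => Stmt8Aux.wt M (List.ofFn w ++ [j])) with hs
  refine ⟨s, fun i j => ?_⟩
  have key : s j ≤ s i + M i j := by
    obtain ⟨w, -, hw⟩ := Finset.exists_mem_eq_inf' (Finset.univ_nonempty)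
      (fun w : Fin n → Fin n => Stmt8Aux.wt M (List.ofFn w ++ [i]))
    have hsi : s i = Stmt8Aux.wt M (List.ofFn w ++ [i]) := hw
    set p : List (Fin n) := List.ofFn w ++ i :: [j] with hp
    have hpne : p ≠ [] := by simp [hp]
    have hwtp : Stmt8Aux.wt M p = s i + M i j := by
      rw [hp, Stmt8Aux.wt_append M i [j] (List.ofFn w), ← hsi]
      simp
    have hplast : p.getLast hpne = j := by
      have h2 : (List.ofFn w ++ [i, j] : List (Fin n)).getLast (by simp) = j := by
        rw [List.getLast_append_of_right_ne_nil (h := List.cons_ne_nil i [j])]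
        simp
      exact h2
    obtain ⟨q, hq, hqlen, hqhead, hqlast, hqwt⟩ :=
      Stmt8Aux.exists_short M hdiag hperm p.length p hpne le_rfl
    set k := n + 1 - q.length with hk
    set q' := List.replicate k (q.head hq) ++ q with hq'
    have hq'ne : q' ≠ [] := by simp [hq', hq]
    have hq'len : q'.length = n + 1 := by
      simp only [hq', List.length_append, List.length_replicate, hk]
      omega
    have hq'wt : Stmt8Aux.wt M q' = Stmt8Aux.wt M q :=
      Stmt8Aux.wt_replicate_append M hdiag q hq k
    have hq'last : q'.getLast hq'ne = j := by
      have h2 : (List.replicate k (q.head hq) ++ q).getLast (by simp [hq]) = q.getLast hq :=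
        List.getLast_append_of_right_ne_nil _ _ hq
      rw [hqlast, hplast] at h2
      exact h2
    have hdp : q' = q'.dropLast ++ [j] := by
      conv_lhs => rw [← List.dropLast_append_getLast hq'ne]
      rw [hq'last]
    have hrlen : q'.dropLast.length = n := by
      rw [List.length_dropLast, hq'len]
      omega
    set w' : Fin n → Fin n := fun t => q'.dropLast[(t : ℕ)]'(by rw [hrlen]; exact t.2) with hw'
    have hofn : List.ofFn w' = q'.dropLast := by
      apply List.ext_getElem
      · simp [hrlen]
      · intro t h1 h2
        simp [hw']
    have hle : s j ≤ Stmt8Aux.wt M (List.ofFn w' ++ [j]) :=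
      Finset.inf'_le _ (Finset.mem_univ w')
    rw [hofn, ← hdp, hq'wt] at hle
    calc s j ≤ Stmt8Aux.wt M q := hle
      _ ≤ Stmt8Aux.wt M p := hqwt
      _ = s i + M i j := hwtp
  linarith
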